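/- If f(x) is a monic polynomial of degree at least 1 over Z/4Z whose reduction modulo 2 factors over Z/2Z as a product of pairwise coprime polynomials t_1(x)···t_r(x), then f(x) factors as f_1(x)···f_r(x) where the f_i are pairwise coprime monic polynomials over Z/4Z with reduction of f_i equal to t_i and deg(f_i) = deg(t_i) for each i. -/

import Mathlib

open Polynomial

/-- Reduction mod 2 on coefficients, `ℤ/4 → ℤ/2`. -/
noncomputable def red2 : ZMod 4 →+* ZMod 2 := ZMod.castHom (show (2:ℕ) ∣ 4 by norm_num) (ZMod 2)

namespace HenselAux

def lf : ZMod 2 → ZMod 4 := fun c => (c.val : ZMod 4)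
def pf : ZMod 4 → ZMod 2 := fun a => ((a.val / 2 : ℕ) : ZMod 2)

noncomputable def L (p : Polynomial (ZMod 2)) : Polynomial (ZMod 4) :=
  ⟨AddMonoidAlgebra.ofCoeff (p.toFinsupp.coeff.mapRange lf (by decide))⟩

noncomputable def D (p : Polynomial (ZMod 4)) : Polynomial (ZMod 2) :=
  ⟨AddMonoidAlgebra.ofCoeff (p.toFinsupp.coeff.mapRange pf (by decide))⟩

@[simp] lemma coeff_L (p : Polynomial (ZMod 2)) (i : ℕ) : (L p).coeff i = lf (p.coeff i) := rfl
@[simp] lemma coeff_D (p : Polynomial (ZMod 4)) (i : ℕ) : (D p).coeff i = pf (p.coeff i) := rfl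

@[simp] lemma map_red2_L (p : Polynomial (ZMod 2)) : (L p).map red2 = p := by
  ext i
  rw [coeff_map, coeff_L]
  exact (by decide : ∀ c : ZMod 2, red2 (lf c) = c) _

lemma degree_L (p : Polynomial (ZMod 2)) : (L p).degree = p.degree := by
  refine le_antisymm ?_ ?_
  · rw [degree_le_iff_coeff_zero]
    intro m hm
    rw [coeff_L, coeff_eq_zero_of_degree_lt hm]
    decide
  · have h2 := degree_map_le (f := red2) (p := L p)
    rwa [map_red2_L] at h2

lemma monic_L {p : Polynomial (ZMod 2)} (hp : p.Monic) : (L p).Monic := by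
  have h0 : p ≠ 0 := hp.ne_zero
  have hL0 : L p ≠ 0 := by
    intro h
    apply h0
    rw [← map_red2_L p, h, Polynomial.map_zero]
  have hnd : (L p).natDegree = p.natDegree := natDegree_eq_of_degree_eq (degree_L p)
  unfold Monic leadingCoeff
  rw [hnd, coeff_L, hp.coeff_natDegree]
  decide

lemma degree_D_le (p : Polynomial (ZMod 4)) : (D p).degree ≤ p.degree := by
  rw [degree_le_iff_coeff_zero]
  intro m hm
  rw [coeff_D, coeff_eq_zero_of_degree_lt hm]
  decide

lemma two_mul_eq {q q' : Polynomial (ZMod 4)} (h : q.map red2 = q'.map red2) :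
    C 2 * q = C 2 * q' := by
  ext i
  rw [coeff_C_mul, coeff_C_mul]
  have := congrArg (fun p => Polynomial.coeff p i) h
  simp only [coeff_map] at this
  exact (by decide : ∀ a b : ZMod 4, red2 a = red2 b → 2 * a = 2 * b) _ _ this

lemma map_two_mul (q : Polynomial (ZMod 4)) : (C 2 * q).map red2 = 0 := by
  rw [Polynomial.map_mul, map_C]
  have : red2 2 = 0 := by decide
  rw [this, map_zero, zero_mul]

lemma eq_two_mul_D {d : Polynomial (ZMod 4)} (hd : d.map red2 = 0) :
    d = C 2 * L (D d) := by
  ext i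
  rw [coeff_C_mul, coeff_L, coeff_D]
  have := congrArg (fun p => Polynomial.coeff p i) hd
  simp only [coeff_map, coeff_zero] at this
  exact (by decide : ∀ a : ZMod 4, red2 a = 0 → a = 2 * lf (pf a)) _ this

lemma mul_two_L (u : Polynomial (ZMod 4)) (p : Polynomial (ZMod 2)) :
    u * (C 2 * L p) = C 2 * L (u.map red2 * p) := by
  rw [mul_left_comm]
  exact two_mul_eq (by rw [Polynomial.map_mul, map_red2_L, map_red2_L])

lemma two_L_add (a b : Polynomial (ZMod 2)) :
    C 2 * L a + C 2 * L b = C 2 * L (a + b) := by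
  rw [← mul_add]
  exact two_mul_eq (by rw [Polynomial.map_add, map_red2_L, map_red2_L, map_red2_L])

lemma two_mul_two (q q' : Polynomial (ZMod 4)) : (C 2 * q) * (C 2 * q') = 0 := by
  have : (C 2 * q) * (C 2 * q') = C (2 * 2 : ZMod 4) * (q * q') := by
    rw [C_mul]; ring
  rw [this, (by decide : (2 * 2 : ZMod 4) = 0), C_0, zero_mul]

lemma coprime_of_red2 {A B : Polynomial (ZMod 4)}
    (h : IsCoprime (A.map red2) (B.map red2)) : IsCoprime A B := by
  obtain ⟨a, b, hab⟩ := h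
  set u : Polynomial (ZMod 4) := L a * A + L b * B with hu
  have hmu : u.map red2 = 1 := by
    rw [hu, Polynomial.map_add, Polynomial.map_mul, Polynomial.map_mul,
      map_red2_L, map_red2_L, hab]
  have h0 : (1 - u).map red2 = 0 := by
    rw [Polynomial.map_sub, hmu, Polynomial.map_one, sub_self]
  set q := L (D (1 - u)) with hq
  have h1u : 1 - u = C 2 * q := eq_two_mul_D h0
  have hunit : u * (1 + C 2 * q) = 1 := by
    have hu' : u = 1 - C 2 * q := by rw [← h1u]; ring
    rw [hu']
    linear_combination (-1 : Polynomial (ZMod 4)) * two_mul_two q q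
  refine ⟨(1 + C 2 * q) * L a, (1 + C 2 * q) * L b, ?_⟩
  calc (1 + C 2 * q) * L a * A + (1 + C 2 * q) * L b * B
      = u * (1 + C 2 * q) := by rw [hu]; ring
    _ = 1 := hunit

instance : Nontrivial (ZMod 4) := ⟨0, 1, by decide⟩

lemma wb_add_lt {a : WithBot ℕ} {n m : ℕ} (h : a < (n : WithBot ℕ)) :
    a + (m : WithBot ℕ) < ((n + m : ℕ) : WithBot ℕ) := by
  have hb : ((m : ℕ) : WithBot ℕ) ≠ ⊥ := by exact_mod_cast WithBot.coe_ne_bot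
  have h2 := WithBot.add_lt_add_right hb h
  simpa [Nat.cast_add] using h2

lemma degree_sigma_lt (f : Polynomial (ZMod 4)) (hf : f.Monic)
    (g h : Polynomial (ZMod 2)) (hg : g.Monic) (hh : h.Monic)
    (hfgh : f.map red2 = g * h) {a b : Polynomial (ZMod 2)}
    (hab : a * g + b * h = 1) :
    (a * D (f - L g * L h) + ((b * D (f - L g * L h)) /ₘ g) * h).degree < h.degree := by
  set d := f - L g * L h with hd
  set e := D d with he
  set ρ := (b * e) %ₘ g with hρ
  set σ := a * e + ((b * e) /ₘ g) * h with hσ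
  have hmod : (b * e) %ₘ g + g * ((b * e) /ₘ g) = b * e := modByMonic_add_div _ g
  have key : σ * g + ρ * h = e := by
    rw [hσ, hρ]
    linear_combination e * hab + h * hmod
  have hfd : f.natDegree = g.natDegree + h.natDegree := by
    rw [← hf.natDegree_map red2, hfgh, hg.natDegree_mul hh]
  have hLgh : (L g * L h).Monic := (monic_L hg).mul (monic_L hh)
  have hLghd : (L g * L h).natDegree = g.natDegree + h.natDegree := by
    rw [(monic_L hg).natDegree_mul (monic_L hh),
      natDegree_eq_of_degree_eq (degree_L g), natDegree_eq_of_degree_eq (degree_L h)]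
  have hfdeg : f.degree = ((g.natDegree + h.natDegree : ℕ) : WithBot ℕ) := by
    rw [degree_eq_natDegree hf.ne_zero, hfd]
  have hdeq : f.degree = (L g * L h).degree := by
    rw [hfdeg, degree_eq_natDegree hLgh.ne_zero, hLghd]
  have hd_lt : d.degree < f.degree := by
    refine degree_sub_lt hdeq hf.ne_zero ?_
    rw [hf.leadingCoeff, hLgh.leadingCoeff]
  have he_lt : e.degree < ((g.natDegree + h.natDegree : ℕ) : WithBot ℕ) :=
    lt_of_le_of_lt (degree_D_le d) (by rw [← hfdeg]; exact hd_lt)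
  have hdegρ : ρ.degree < g.degree := degree_modByMonic_lt _ hg
  have hρh : (ρ * h).degree < ((g.natDegree + h.natDegree : ℕ) : WithBot ℕ) := by
    refine lt_of_le_of_lt (degree_mul_le _ _) ?_
    have : ρ.degree < (g.natDegree : WithBot ℕ) := by
      rw [← degree_eq_natDegree hg.ne_zero]; exact hdegρ
    rw [degree_eq_natDegree hh.ne_zero]
    exact wb_add_lt this
  by_cases hσ0 : σ = 0
  · rw [hσ0, degree_zero, degree_eq_natDegree hh.ne_zero]
    exact WithBot.bot_lt_coe _
  · have hσg : σ * g = e - ρ * h := by linear_combination key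
    have h1 : (σ * g).degree < ((g.natDegree + h.natDegree : ℕ) : WithBot ℕ) := by
      rw [hσg]
      refine lt_of_le_of_lt (degree_sub_le _ _) ?_
      rw [max_lt_iff]
      exact ⟨he_lt, hρh⟩
    have h2 : (σ * g).degree = ((σ.natDegree + g.natDegree : ℕ) : WithBot ℕ) := by
      rw [degree_mul, degree_eq_natDegree hσ0, degree_eq_natDegree hg.ne_zero]
      exact_mod_cast rfl
    rw [h2] at h1
    have h3 : σ.natDegree + g.natDegree < g.natDegree + h.natDegree := by exact_mod_cast h1
    have h4 : σ.natDegree < h.natDegree := by omega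
    rw [degree_eq_natDegree hσ0, degree_eq_natDegree hh.ne_zero]
    exact_mod_cast h4

lemma lift_pair (f : Polynomial (ZMod 4)) (hf : f.Monic)
    (g h : Polynomial (ZMod 2)) (hg : g.Monic) (hh : h.Monic)
    (hfgh : f.map red2 = g * h) (hco : IsCoprime g h) :
    ∃ G H : Polynomial (ZMod 4), f = G * H ∧ G.Monic ∧ H.Monic ∧
      G.map red2 = g ∧ H.map red2 = h := by
  set d := f - L g * L h with hd
  have hd0 : d.map red2 = 0 := by
    rw [hd, Polynomial.map_sub, Polynomial.map_mul, map_red2_L, map_red2_L, hfgh, sub_self]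
  set e := D d with he
  have hde : d = C 2 * L e := eq_two_mul_D hd0
  obtain ⟨a, b, hab⟩ := hco
  set ρ := (b * e) %ₘ g with hρ
  set σ := a * e + ((b * e) /ₘ g) * h with hσ
  have hmod : (b * e) %ₘ g + g * ((b * e) /ₘ g) = b * e := modByMonic_add_div _ g
  have key : σ * g + ρ * h = e := by
    rw [hσ, hρ]
    linear_combination e * hab + h * hmod
  refine ⟨L g + C 2 * L ρ, L h + C 2 * L σ, ?_, ?_, ?_, ?_, ?_⟩
  case _ =>
    have expand : (L g + C 2 * L ρ) * (L h + C 2 * L σ)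
        = L g * L h + (L g * (C 2 * L σ) + L h * (C 2 * L ρ)) + (C 2 * L ρ) * (C 2 * L σ) := by
      ring
    rw [expand, two_mul_two, add_zero, mul_two_L, mul_two_L, map_red2_L, map_red2_L,
      two_L_add]
    have : g * σ + h * ρ = e := by linear_combination key
    rw [this, ← hde, hd]
    ring
  -- degree bookkeeping
  case _ =>
    -- G monic
    have hdegρ : ρ.degree < g.degree := degree_modByMonic_lt _ hg
    have h5 : (C (2:ZMod 4) * L ρ).degree ≤ (L ρ).degree := by
      refine le_trans (degree_mul_le _ _) ?_
      calc degree (C (2:ZMod 4)) + (L ρ).degree ≤ 0 + (L ρ).degree :=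
            add_le_add_left degree_C_le _
        _ = (L ρ).degree := zero_add _
    have hCρ : (C (2:ZMod 4) * L ρ).degree < (L g).degree := by
      refine lt_of_le_of_lt h5 ?_
      rw [degree_L, degree_L]; exact hdegρ
    exact (monic_L hg).add_of_left hCρ
  case _ =>
    -- H monic
    have hdegσ : σ.degree < h.degree := degree_sigma_lt f hf g h hg hh hfgh hab
    have h5 : (C (2:ZMod 4) * L σ).degree ≤ (L σ).degree := by
      refine le_trans (degree_mul_le _ _) ?_
      calc degree (C (2:ZMod 4)) + (L σ).degree ≤ 0 + (L σ).degree :=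
            add_le_add_left degree_C_le _
        _ = (L σ).degree := zero_add _
    have hCσ : (C (2:ZMod 4) * L σ).degree < (L h).degree := by
      refine lt_of_le_of_lt h5 ?_
      rw [degree_L, degree_L]; exact hdegσ
    exact (monic_L hh).add_of_left hCσ
  case _ =>
    rw [Polynomial.map_add, map_red2_L, map_two_mul, add_zero]
  case _ =>
    rw [Polynomial.map_add, map_red2_L, map_two_mul, add_zero]

lemma hensel_aux : ∀ (r : ℕ) (f : Polynomial (ZMod 4)) (_ : f.Monic)
    (t : Fin r → Polynomial (ZMod 2)) (_ : ∀ i, (t i).Monic)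
    (_ : f.map red2 = ∏ i, t i) (_ : Pairwise (Function.onFun IsCoprime t)),
    ∃ F : Fin r → Polynomial (ZMod 4),
      f = ∏ i, F i ∧ (∀ i, (F i).Monic) ∧ Pairwise (Function.onFun IsCoprime F) ∧
      (∀ i, (F i).map red2 = t i) := by
  intro r
  induction r with
  | zero =>
    intro f hf t ht hfact hcop
    refine ⟨fun i => i.elim0, ?_, fun i => i.elim0, fun i j _ => i.elim0, fun i => i.elim0⟩
    have h1 : f.map red2 = 1 := by rw [hfact]; exact Finset.prod_of_isEmpty _
    have h0 : f.natDegree = 0 := by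
      rw [← hf.natDegree_map red2, h1, natDegree_one]
    rw [hf.natDegree_eq_zero.mp h0]
    exact (Finset.prod_of_isEmpty _).symm
  | succ n ih =>
    intro f hf t ht hfact hcop
    set g := t 0 with hgdef
    set h := ∏ i : Fin n, t i.succ with hhdef
    have hhm : h.Monic := monic_prod_of_monic _ _ fun i _ => ht i.succ
    have hco : IsCoprime g h := IsCoprime.prod_right fun i _ =>
      hcop (Fin.succ_ne_zero i).symm
    have hfgh : f.map red2 = g * h := by rw [hfact, Fin.prod_univ_succ]
    obtain ⟨G, H, hGH, hGm, hHm, hGmap, hHmap⟩ := lift_pair f hf g h (ht 0) hhm hfgh hco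
    obtain ⟨F', hF1, hF2, hF3, hF4⟩ := ih H hHm (fun i => t i.succ) (fun i => ht i.succ)
      (by rw [hHmap]) (fun i j hij => hcop fun hc => hij (Fin.succ_injective n hc))
    refine ⟨Fin.cons G F', ?_, ?_, ?_, ?_⟩
    · rw [Fin.prod_univ_succ, Fin.cons_zero]
      simp only [Fin.cons_succ]
      rw [hGH, hF1]
    · intro i
      refine Fin.cases ?_ ?_ i
      · rwa [Fin.cons_zero]
      · intro j; rw [Fin.cons_succ]; exact hF2 j
    · have hmap : ∀ i, ((Fin.cons G F' : Fin (n+1) → Polynomial (ZMod 4)) i).map red2 = t i := by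
        intro i
        refine Fin.cases ?_ ?_ i
        · rw [Fin.cons_zero, hGmap]
        · intro j; rw [Fin.cons_succ, hF4 j]
      intro i j hij
      refine coprime_of_red2 ?_
      rw [hmap i, hmap j]
      exact hcop hij
    · intro i
      refine Fin.cases ?_ ?_ i
      · rw [Fin.cons_zero, hGmap]
      · intro j; rw [Fin.cons_succ, hF4 j]

end HenselAux

/-- Hensel's Lemma: a factorization of the mod-2 reduction of a monic polynomial over `ℤ/4`
into pairwise coprime factors lifts to a factorization over `ℤ/4` into pairwise coprime
monic factors with matching reductions and degrees. -/
theorem hensel_factorization (f : Polynomial (ZMod 4)) (hf : f.Monic)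
    (hdeg : 1 ≤ f.natDegree) (r : ℕ) (t : Fin r → Polynomial (ZMod 2))
    (hfact : f.map red2 = ∏ i, t i)
    (hcop : Pairwise (Function.onFun IsCoprime t)) :
    ∃ F : Fin r → Polynomial (ZMod 4),
      f = ∏ i, F i ∧ (∀ i, (F i).Monic) ∧ Pairwise (Function.onFun IsCoprime F) ∧
      (∀ i, (F i).map red2 = t i) ∧ (∀ i, (F i).natDegree = (t i).natDegree) := by
  have ht : ∀ i, (t i).Monic := by
    have hm : (∏ i, t i).Monic := by rw [← hfact]; exact hf.map red2
    intro i
    have hlc : (∏ j, (t j).leadingCoeff) = 1 := by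
      rw [← leadingCoeff_prod]; exact hm
    have hne : (t i).leadingCoeff ≠ 0 := by
      intro hj
      rw [Finset.prod_eq_zero (Finset.mem_univ i) hj] at hlc
      exact absurd hlc (by decide)
    show (t i).leadingCoeff = 1
    exact (by decide : ∀ c : ZMod 2, c ≠ 0 → c = 1) _ hne
  obtain ⟨F, h1, h2, h3, h4⟩ := HenselAux.hensel_aux r f hf t ht hfact hcop
  exact ⟨F, h1, h2, h3, h4, fun i => by
    rw [← h4 i, (h2 i).natDegree_map red2]⟩
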